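/- Let z be a nonzero real number, let a be a real number that is not a nonpositive integer, and let d ≥ 1 be an integer. If c is a real number and there exists a polynomial q with real coefficients such that for every integer n ≥ 0, ∑_{k=0}^{n−1} (k^d − c)·z^k / a^{(k)} = q(n)·z^n / a^{(n)} − q(0), then c equals the d-th iterated derivative at 0 of f_{a,z}(x) = exp(−z − (a−1)x + z·e^x). -/

import Mathlib

open Real Polynomial
set_option maxHeartbeats 1000000

/-- Rising factorial `a^{(k)} = a (a+1) ⋯ (a+k-1)` of a real number. -/
def risingFactorial (a : ℝ) : ℕ → ℝ
  | 0 => 1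
  | k + 1 => risingFactorial a k * (a + k)


lemma exp_tsum (x : ℝ) : Real.exp x = ∑' n : ℕ, x ^ n / n.factorial := by
  rw [Real.exp_eq_exp_ℝ, NormedSpace.exp_eq_tsum_div]

lemma sum_aux0 (z : ℝ) (i : ℕ) : Summable (fun m : ℕ => (m:ℝ)^i * z^m / m.factorial) := by
  have h2 : Summable (fun m : ℕ => (m:ℝ)^i * (1/2:ℝ)^m) :=
    summable_pow_mul_geometric_of_norm_lt_one (R := ℝ) i (by rw [Real.norm_eq_abs]; rw [abs_of_pos]; norm_num; norm_num)
  have hb : ∃ C, ∀ m : ℕ, (m:ℝ)^i * (1/2:ℝ)^m ≤ C := by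
    obtain ⟨C, hC⟩ := (h2.tendsto_atTop_zero.bddAbove_range)
    exact ⟨C, fun m => hC ⟨m, rfl⟩⟩
  obtain ⟨C, hC⟩ := hb
  apply Summable.of_norm
  refine Summable.of_nonneg_of_le (fun m => norm_nonneg _) ?_
    ((Real.summable_pow_div_factorial (2*|z|)).mul_left C)
  · intro m
    have h1 : ‖(m:ℝ)^i * z^m / m.factorial‖ = ((m:ℝ)^i * (1/2:ℝ)^m) * ((2*|z|)^m / m.factorial) := by
      rw [Real.norm_eq_abs, abs_div, abs_mul, abs_pow, abs_pow, Nat.abs_cast, Nat.abs_cast, mul_pow]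
      field_simp
      rw [mul_assoc _ ((1 / 2 : ℝ) ^ m), ← mul_pow]; norm_num
    rw [h1]
    apply mul_le_mul_of_nonneg_right (hC m)
    positivity

lemma sum_aux1 (z b : ℝ) (i : ℕ) : Summable (fun m : ℕ => ((m:ℝ)+b)^i * z^m / m.factorial) := by
  have he : (fun m : ℕ => ((m:ℝ)+b)^i * z^m / m.factorial)
      = fun m : ℕ => ∑ j ∈ Finset.range (i+1), (b^(i-j) * (i.choose j)) * ((m:ℝ)^j * z^m / m.factorial) := by
    funext m
    rw [add_pow, Finset.sum_mul, Finset.sum_div]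
    apply Finset.sum_congr rfl
    intro j hj
    ring
  rw [he]
  exact summable_sum (fun j _ => (sum_aux0 z j).mul_left _)

lemma sum_aux2 (z b : ℝ) (p : ℝ[X]) : Summable (fun m : ℕ => p.eval ((m:ℝ)+b) * z^m / m.factorial) := by
  have he : (fun m : ℕ => p.eval ((m:ℝ)+b) * z^m / m.factorial)
      = fun m : ℕ => ∑ j ∈ Finset.range (p.natDegree + 1), p.coeff j * (((m:ℝ)+b)^j * z^m / m.factorial) := by
    funext m
    rw [Polynomial.eval_eq_sum_range, Finset.sum_mul, Finset.sum_div]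
    apply Finset.sum_congr rfl; intro j hj; ring
  rw [he]
  exact summable_sum (fun j _ => (sum_aux1 z b j).mul_left _)

lemma shift_aux (z b : ℝ) (p : ℝ[X]) :
    ∑' m : ℕ, (m:ℝ) * p.eval ((m:ℝ)+b) * z^m / m.factorial
      = z * ∑' m : ℕ, p.eval ((m:ℝ)+1+b) * z^m / m.factorial := by
  have hs : Summable (fun m : ℕ => (m:ℝ) * p.eval ((m:ℝ)+b) * z^m / m.factorial) := by
    have he : (fun m : ℕ => (m:ℝ) * p.eval ((m:ℝ)+b) * z^m / m.factorial)
        = fun m : ℕ => ((X - C b) * p).eval ((m:ℝ)+b) * z^m / m.factorial := by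
      funext m; simp only [Polynomial.eval_mul, Polynomial.eval_sub, Polynomial.eval_X,
        Polynomial.eval_C]; ring
    rw [he]; exact sum_aux2 z b _
  rw [Summable.tsum_eq_zero_add hs]
  simp only [Nat.cast_zero, zero_mul, zero_div, zero_add]
  rw [← tsum_mul_left]
  apply tsum_congr
  intro m
  have hfac : ((m+1 : ℕ).factorial : ℝ) = (m+1) * m.factorial := by
    push_cast [Nat.factorial_succ]; ring
  have hm : ((m:ℝ)+1) ≠ 0 := by positivity
  have hf : (m.factorial : ℝ) ≠ 0 := Nat.cast_ne_zero.mpr m.factorial_ne_zero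
  push_cast [hfac]
  field_simp
  ring

noncomputable def Efun (z a j : ℝ) : ℝ → ℝ := fun x => Real.exp (-z - (a-1-j)*x + z*Real.exp x)

lemma Efun_contDiff (z a j : ℝ) : ContDiff ℝ ⊤ (Efun z a j) := by
  apply Real.contDiff_exp.comp
  fun_prop

lemma Efun_deriv (z a j : ℝ) :
    deriv (Efun z a j) = fun x => (j+1-a) * Efun z a j x + z * Efun z a (j+1) x := by
  funext x
  have hg : HasDerivAt (fun x : ℝ => -z - (a-1-j)*x + z*Real.exp x) (-(a-1-j) + z*Real.exp x) x := by
    have h1 : HasDerivAt (fun x : ℝ => -z - (a-1-j)*x) (-(a-1-j)) x := by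
      simpa using (((hasDerivAt_id x).const_mul (a-1-j)).const_sub (-z))
    exact h1.add ((Real.hasDerivAt_exp x).const_mul z)
  have hd := hg.exp
  unfold Efun
  rw [hd.deriv]
  have hE : Real.exp (-z - (a-1-(j+1))*x + z*Real.exp x)
      = Real.exp x * Real.exp (-z - (a-1-j)*x + z*Real.exp x) := by
    rw [← Real.exp_add]
    congr 1
    ring
  rw [hE]
  ring

lemma iD_add {n : ℕ} {f g : ℝ → ℝ} (hf : ContDiff ℝ n f) (hg : ContDiff ℝ n g) (x : ℝ) :
    iteratedDeriv n (fun y => f y + g y) x = iteratedDeriv n f x + iteratedDeriv n g x := by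
  simp only [← iteratedDerivWithin_univ]
  exact iteratedDerivWithin_add (Set.mem_univ x) uniqueDiffOn_univ hf.contDiffWithinAt hg.contDiffWithinAt

lemma iD_cmul {n : ℕ} {f : ℝ → ℝ} (hf : ContDiff ℝ n f) (c x : ℝ) :
    iteratedDeriv n (fun y => c * f y) x = c * iteratedDeriv n f x := by
  simp only [← iteratedDerivWithin_univ]
  exact iteratedDerivWithin_const_mul (Set.mem_univ x) uniqueDiffOn_univ c hf.contDiffWithinAt

noncomputable def TS (z β : ℝ) (n : ℕ) : ℝ := ∑' m : ℕ, ((m:ℝ)+β)^n * z^m / m.factorial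

lemma sum_aux3 (z b : ℝ) (p : ℝ[X]) :
    Summable (fun m : ℕ => (m:ℝ) * p.eval ((m:ℝ)+b) * z^m / m.factorial) := by
  have he : (fun m : ℕ => (m:ℝ) * p.eval ((m:ℝ)+b) * z^m / m.factorial)
      = fun m : ℕ => ((X - C b) * p).eval ((m:ℝ)+b) * z^m / m.factorial := by
    funext m; simp only [Polynomial.eval_mul, Polynomial.eval_sub, Polynomial.eval_X,
      Polynomial.eval_C]; ring
  rw [he]; exact sum_aux2 z b _

lemma TS_rec (z β : ℝ) (n : ℕ) : TS z β (n+1) = β * TS z β n + z * TS z (β+1) n := by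
  unfold TS
  have h1 : ∀ m : ℕ, ((m:ℝ)+β)^(n+1) * z^m / m.factorial
      = (m:ℝ) * (X^n : ℝ[X]).eval ((m:ℝ)+β) * z^m / m.factorial
        + β * (((m:ℝ)+β)^n * z^m / m.factorial) := by
    intro m; simp only [Polynomial.eval_pow, Polynomial.eval_X]; ring
  rw [tsum_congr h1, Summable.tsum_add (sum_aux3 z β (X^n)) ((sum_aux1 z β n).mul_left β),
    tsum_mul_left, shift_aux z β (X^n)]
  have h2 : (∑' m:ℕ, (X^n:ℝ[X]).eval ((m:ℝ)+1+β) * z^m / m.factorial)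
      = ∑' m:ℕ, ((m:ℝ)+(β+1))^n * z^m / m.factorial := by
    apply tsum_congr; intro m
    simp only [Polynomial.eval_pow, Polynomial.eval_X]
    ring_nf
  rw [h2]
  ring

lemma iterderiv_Efun (z a : ℝ) :
    ∀ n : ℕ, ∀ j : ℝ, iteratedDeriv n (Efun z a j) 0 = Real.exp (-z) * TS z (1+j-a) n := by
  intro n
  induction n with
  | zero =>
    intro j
    rw [iteratedDeriv_zero]
    have h2 : TS z (1+j-a) 0 = Real.exp z := by
      unfold TS
      rw [exp_tsum z]
      apply tsum_congr; intro m; rw [pow_zero, one_mul]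
    rw [h2, ← Real.exp_add]
    unfold Efun
    norm_num
  | succ n ih =>
    intro j
    have hE1 : ContDiff ℝ (n : ℕ∞) (fun y => (j+1-a) * Efun z a j y) :=
      contDiff_const.mul ((Efun_contDiff z a j).of_le le_top)
    have hE2 : ContDiff ℝ (n : ℕ∞) (fun y => z * Efun z a (j+1) y) :=
      contDiff_const.mul ((Efun_contDiff z a (j+1)).of_le le_top)
    rw [iteratedDeriv_succ', Efun_deriv, iD_add hE1 hE2,
      iD_cmul ((Efun_contDiff z a j).of_le le_top),
      iD_cmul ((Efun_contDiff z a (j+1)).of_le le_top), ih j, ih (j+1), TS_rec]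
    have hb : 1+j-a+1 = 1+(j+1)-a := by ring
    rw [hb]
    ring

lemma rf_ne_zero (a : ℝ) (ha : ∀ m : ℕ, a ≠ -(m : ℝ)) : ∀ n, risingFactorial a n ≠ 0 := by
  intro n
  induction n with
  | zero => simp [risingFactorial]
  | succ n ih =>
    simp only [risingFactorial]
    apply mul_ne_zero ih
    intro hcon
    exact ha n (by linarith)

theorem stmt_7 (z a : ℝ) (hz : z ≠ 0) (ha : ∀ m : ℕ, a ≠ -(m : ℝ)) (d : ℕ) (hd : 1 ≤ d)
    (c : ℝ)
    (h : ∃ q : Polynomial ℝ, ∀ n : ℕ,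
      ∑ k ∈ Finset.range n, (((k : ℝ) ^ d - c) * z ^ k / risingFactorial a k) =
        q.eval (n : ℝ) * z ^ n / risingFactorial a n - q.eval 0) :
    c = iteratedDeriv d (fun x : ℝ => Real.exp (-z - (a - 1) * x + z * Real.exp x)) 0 := by
  obtain ⟨q, hq⟩ := h
  have hstep : ∀ n : ℕ, z * q.eval ((n:ℝ)+1) = ((n:ℝ)+a) * (q.eval (n:ℝ) + (n:ℝ)^d - c) := by
    intro n
    have hr : risingFactorial a n ≠ 0 := rf_ne_zero a ha n
    have hs : a + (n:ℝ) ≠ 0 := fun hcon => ha n (by linarith)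
    have hzn : z^n ≠ 0 := pow_ne_zero n hz
    have key : ((n:ℝ)^d - c) * z^n / risingFactorial a n
        = q.eval ((n:ℝ)+1) * (z^n * z) /(risingFactorial a n * (a+(n:ℝ))) - q.eval (n:ℝ) * z^n / risingFactorial a n := by
      have h2 := hq (n+1)
      rw [Finset.sum_range_succ, hq n] at h2
      have hRF : risingFactorial a (n+1) = risingFactorial a n * (a + (n:ℝ)) := rfl
      rw [hRF] at h2
      push_cast at h2
      rw [pow_succ] at h2
      linarith
    field_simp at key
    have key2 : ((n:ℝ)^d - c)*z^n*(a+(n:ℝ)) * (risingFactorial a n * risingFactorial a n)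
        = (q.eval ((n:ℝ)+1)*z^n*z - (a+(n:ℝ))*(q.eval (n:ℝ))*z^n) * (risingFactorial a n * risingFactorial a n) := by
      linear_combination (z^n * (risingFactorial a n * risingFactorial a n)) * key
    have key3 := mul_right_cancel₀ (mul_ne_zero hr hr) key2
    have goal' : z * q.eval ((n:ℝ)+1) * z^n = ((n:ℝ)+a) * (q.eval (n:ℝ) + (n:ℝ)^d - c) * z^n := by
      linear_combination -key3
    exact mul_right_cancel₀ hzn goal'
  have hP0 : (Polynomial.C z * (q.comp (X + Polynomial.C 1)) - (X + Polynomial.C a) * (q + X^d - Polynomial.C c)) = 0 := by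
    apply Polynomial.eq_zero_of_infinite_isRoot
    apply Set.Infinite.mono (s := Set.range (fun n : ℕ => (n:ℝ)))
    · rintro x ⟨n, rfl⟩
      show Polynomial.IsRoot _ _
      simp only [Polynomial.IsRoot, Polynomial.eval_sub, Polynomial.eval_mul, Polynomial.eval_C,
        Polynomial.eval_comp, Polynomial.eval_add, Polynomial.eval_X, Polynomial.eval_pow,
        Polynomial.eval_one]
      linear_combination hstep n
    · exact Set.infinite_range_of_injective Nat.cast_injective
  have hPid : ∀ x : ℝ, z * q.eval (x+1) = (x+a) * (q.eval x + x^d - c) := by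
    intro x
    have h5 := congrArg (Polynomial.eval x) hP0
    simp only [Polynomial.eval_sub, Polynomial.eval_mul, Polynomial.eval_C, Polynomial.eval_comp,
      Polynomial.eval_add, Polynomial.eval_X, Polynomial.eval_pow, Polynomial.eval_one,
      Polynomial.eval_zero] at h5
    linear_combination h5
  set p : ℝ[X] := q + X^d - Polynomial.C c with hp
  have hpe : ∀ y : ℝ, p.eval y = q.eval y + y^d - c := by
    intro y; simp [hp]
  have hL : ∑' m:ℕ, (m:ℝ) * p.eval ((m:ℝ)+(-a)) * z^m / m.factorial
      = z * ∑' m:ℕ, q.eval ((m:ℝ)+1+(-a)) * z^m / m.factorial := by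
    rw [← tsum_mul_left]
    apply tsum_congr; intro m
    have h6 := hPid ((m:ℝ) + (-a))
    have h7 : (m:ℝ)+1+(-a) = (m:ℝ)+(-a)+1 := by ring
    rw [hpe, h7]
    have h8 : (m:ℝ)+(-a)+a = (m:ℝ) := by ring
    rw [h8] at h6
    linear_combination (-(z^m) / (m.factorial : ℝ)) * h6
  have hshift := shift_aux z (-a) p
  have hBA : ∑' m:ℕ, p.eval ((m:ℝ)+(1-a)) * z^m / m.factorial
      = ∑' m:ℕ, q.eval ((m:ℝ)+(1-a)) * z^m / m.factorial := by
    have h9 : z * ∑' m:ℕ, p.eval ((m:ℝ)+1+(-a)) * z^m / m.factorial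
        = z * ∑' m:ℕ, q.eval ((m:ℝ)+1+(-a)) * z^m / m.factorial := by
      rw [← hshift, hL]
    have h10 := mul_left_cancel₀ hz h9
    have e1 : ∀ m : ℕ, (m:ℝ)+1+(-a) = (m:ℝ)+(1-a) := fun m => by ring
    calc ∑' m:ℕ, p.eval ((m:ℝ)+(1-a)) * z^m / m.factorial
        = ∑' m:ℕ, p.eval ((m:ℝ)+1+(-a)) * z^m / m.factorial := by
          apply tsum_congr; intro m; rw [e1 m]
      _ = ∑' m:ℕ, q.eval ((m:ℝ)+1+(-a)) * z^m / m.factorial := h10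
      _ = ∑' m:ℕ, q.eval ((m:ℝ)+(1-a)) * z^m / m.factorial := by
          apply tsum_congr; intro m; rw [e1 m]
  have hsum_q : Summable (fun m:ℕ => q.eval ((m:ℝ)+(1-a)) * z^m / m.factorial) := sum_aux2 z (1-a) q
  have hsum_d : Summable (fun m:ℕ => ((m:ℝ)+(1-a))^d * z^m / m.factorial) := sum_aux1 z (1-a) d
  have hsum_c : Summable (fun m:ℕ => c * (z^m / m.factorial)) :=
    (Real.summable_pow_div_factorial z).mul_left c
  have hsplit : (fun m:ℕ => p.eval ((m:ℝ)+(1-a)) * z^m / m.factorial)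
      = fun m:ℕ => q.eval ((m:ℝ)+(1-a)) * z^m / m.factorial
        + (((m:ℝ)+(1-a))^d * z^m / m.factorial - c * (z^m / m.factorial)) := by
    funext m; rw [hpe]; field_simp; ring
  rw [hsplit, Summable.tsum_add hsum_q (hsum_d.sub hsum_c)] at hBA
  have h11 : ∑' m:ℕ, (((m:ℝ)+(1-a))^d * z^m / m.factorial - c * (z^m / m.factorial)) = 0 := by
    linarith
  rw [Summable.tsum_sub hsum_d hsum_c, tsum_mul_left] at h11
  have hfin : ∑' m:ℕ, (((m:ℝ)+(1-a))^d * z^m / m.factorial) = c * Real.exp z := by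
    rw [exp_tsum z]
    linarith
  have hf0 : (fun x : ℝ => Real.exp (-z - (a-1) * x + z * Real.exp x)) = Efun z a 0 := by
    funext x; unfold Efun; norm_num
  rw [hf0, iterderiv_Efun z a d 0]
  have h12 : (1:ℝ)+0-a = 1-a := by ring
  rw [h12]
  unfold TS
  rw [hfin]
  rw [mul_comm c, ← mul_assoc, ← Real.exp_add]
  simp
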